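/- Consistency of the A₂ scattering diagram without the singularity (the first computation in the proof of Lemma 5.9): as automorphisms of K = ℂ(x,y), 𝒦_{(1,0)}^{−1} ∘ 𝒦_{(0,1)}^{−1} ∘ 𝒦_{(1,0)} ∘ 𝒦_{(1,1)} ∘ 𝒦_{(0,1)} is the identity; equivalently, for every (a₁,a₂) ∈ ℤ² the path-ordered product of the wall-crossing transformations around a full anticlockwise loop crossing the five walls with wall functions 1+y, 1+xy, 1+x, 1+y, 1+x (the last two crossed in the negative direction) fixes x^{a₁} y^{a₂}. -/

import Mathlib

open MvPolynomial

noncomputable section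

/-- `K = ℂ(x,y)`, the field of rational functions in two variables over `ℂ`. -/
abbrev K : Type := FractionRing (MvPolynomial (Fin 2) ℂ)

/-- The rational function `x`. -/
noncomputable def xx : K := algebraMap (MvPolynomial (Fin 2) ℂ) K (X 0)

/-- The rational function `y`. -/
noncomputable def yy : K := algebraMap (MvPolynomial (Fin 2) ℂ) K (X 1)

/-- `z^μ = x^m y^n` for `μ = (m,n) ∈ ℤ²`. -/
noncomputable def zmon (μ : ℤ × ℤ) : K := xx ^ μ.1 * yy ^ μ.2

/-- `⟨μ,γ⟩ = m b − n a` for `μ = (m,n)`, `γ = (a,b)`. -/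
def pairing (μ γ : ℤ × ℤ) : ℤ := μ.1 * γ.2 - μ.2 * γ.1

/-- `Φ` is the wall-crossing transformation `𝒦_{γ,d}`: the `ℂ`-algebra automorphism of `K`
satisfying `𝒦_{γ,d}(z^μ) = z^μ (1+z^γ)^{d⟨μ,γ⟩}` for all `μ ∈ ℤ²`. -/
def IsWallCrossing (d : ℤ) (γ : ℤ × ℤ) (Φ : K ≃ₐ[ℂ] K) : Prop :=
  ∀ μ : ℤ × ℤ, Φ (zmon μ) = zmon μ * (1 + zmon γ) ^ (d * pairing μ γ)

set_option synthInstance.maxHeartbeats 1000000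
set_option maxHeartbeats 2000000

-- helper lemmas
lemma zmon10 : zmon (1,0) = xx := by simp [zmon]
lemma zmon01 : zmon (0,1) = yy := by simp [zmon]
lemma zmon11 : zmon (1,1) = xx * yy := by simp [zmon]

lemma poly_ne (p : MvPolynomial (Fin 2) ℂ) (s : Fin 2 → ℂ) (h : eval s p ≠ 0) :
    algebraMap (MvPolynomial (Fin 2) ℂ) K p ≠ 0 := by
  intro hp
  have hinj := IsFractionRing.injective (MvPolynomial (Fin 2) ℂ) K
  have : p = 0 := by
    apply hinj; rw [hp, map_zero]
  rw [this] at h; simp at h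

lemma one_add_xx_ne : (1 : K) + xx ≠ 0 := by
  have : (1:K) + xx = algebraMap (MvPolynomial (Fin 2) ℂ) K (1 + X 0) := by
    simp [xx]
  rw [this]
  exact poly_ne _ (fun _ => 0) (by simp)

lemma one_add_xy_ne : (1 : K) + xx * yy ≠ 0 := by
  have : (1:K) + xx * yy = algebraMap (MvPolynomial (Fin 2) ℂ) K (1 + X 0 * X 1) := by
    simp [xx, yy]
  rw [this]
  exact poly_ne _ (fun _ => 0) (by simp)

lemma one_add_x_xy_ne : (1 : K) + xx + xx * yy ≠ 0 := by
  have : (1:K) + xx + xx * yy = algebraMap (MvPolynomial (Fin 2) ℂ) K (1 + X 0 + X 0 * X 1) := by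
    simp [xx, yy]
  rw [this]
  exact poly_ne _ (fun _ => 0) (by simp)

lemma algHom_ext' (g h : K →ₐ[ℂ] K) (h1 : g xx = h xx) (h2 : g yy = h yy) : g = h := by
  have : (g : K →+* K) = (h : K →+* K) := by
    apply IsLocalization.ringHom_ext (nonZeroDivisors (MvPolynomial (Fin 2) ℂ))
    apply MvPolynomial.ringHom_ext
    · intro c
      have hc : (algebraMap (MvPolynomial (Fin 2) ℂ) K) (C c) = algebraMap ℂ K c := by
        rw [← MvPolynomial.algebraMap_eq, ← IsScalarTower.algebraMap_apply]
      simp only [RingHom.comp_apply, hc]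
      exact (g.commutes c).trans (h.commutes c).symm
    · intro i
      fin_cases i
      · exact h1
      · exact h2
  exact AlgHom.coe_ringHom_injective this

/-- Consistency of the A₂ scattering diagram without the singularity: as automorphisms
of `K = ℂ(x,y)`, the composite `𝒦_{(1,0)}⁻¹ ∘ 𝒦_{(0,1)}⁻¹ ∘ 𝒦_{(1,0)} ∘ 𝒦_{(1,1)} ∘ 𝒦_{(0,1)}`
is the identity; i.e. the path-ordered product around a full anticlockwise loop crossing
the five walls fixes every element (in particular every monomial `x^{a₁}y^{a₂}`). -/
theorem A2_full_loop_consistency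
    (K01 K11 K10 : K ≃ₐ[ℂ] K)
    (h01 : IsWallCrossing 1 (0, 1) K01) (h11 : IsWallCrossing 1 (1, 1) K11)
    (h10 : IsWallCrossing 1 (1, 0) K10) :
    ∀ f : K, K10.symm (K01.symm (K10 (K11 (K01 f)))) = f := by
  have hu := one_add_xx_ne
  have hw := one_add_xy_ne
  have hs := one_add_x_xy_ne
  -- explicit values
  have e01x : K01 xx = xx * (1 + yy) := by
    have := h01 (1,0); rw [zmon10, zmon01] at this
    simpa [pairing] using this
  have e01y : K01 yy = yy := by
    have := h01 (0,1); rw [zmon01] at this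
    simpa [pairing] using this
  have e11x : K11 xx = xx * (1 + xx * yy) := by
    have := h11 (1,0); rw [zmon10, zmon11] at this
    simpa [pairing] using this
  have e11y : K11 yy = yy * (1 + xx * yy)⁻¹ := by
    have := h11 (0,1); rw [zmon01, zmon11] at this
    simpa [pairing, zpow_neg, zpow_one] using this
  have e10x : K10 xx = xx := by
    have := h10 (1,0); rw [zmon10] at this
    simpa [pairing] using this
  have e10y : K10 yy = yy * (1 + xx)⁻¹ := by
    have := h10 (0,1); rw [zmon01, zmon10] at this
    simpa [pairing, zpow_neg, zpow_one] using this
  -- the pentagon identity K10 ∘ K11 ∘ K01 = K01 ∘ K10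
  have hcomm : ∀ f : K, K10 (K11 (K01 f)) = K01 (K10 f) := by
    have := algHom_ext'
      ((K10.toAlgHom.comp K11.toAlgHom).comp K01.toAlgHom)
      (K01.toAlgHom.comp K10.toAlgHom) ?_ ?_
    · intro f; exact AlgHom.congr_fun this f
    · -- on xx
      simp only [AlgHom.comp_apply, AlgEquiv.toAlgHom_eq_coe, AlgHom.coe_coe, AlgEquiv.coe_algHom]
      rw [e01x, map_mul, map_add, map_one, e11x, e11y, e10x, e01x]
      rw [map_mul, map_mul, map_add, map_one, map_mul, map_add, map_one, map_mul,
        map_inv₀, map_add, map_one, map_mul, e10x, e10y]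
      field_simp
      ring
    · -- on yy
      simp only [AlgHom.comp_apply, AlgEquiv.toAlgHom_eq_coe, AlgHom.coe_coe, AlgEquiv.coe_algHom]
      rw [e01y, e11y, map_mul, map_inv₀, map_add, map_one, map_mul, e10x, e10y,
        map_mul, map_inv₀, map_add, map_one, e01x, e01y]
      have h2 : (1:K) + xx * yy * (1 + xx)⁻¹ ≠ 0 := by
        have : (1:K) + xx * yy * (1 + xx)⁻¹ = (1 + xx + xx * yy) * (1 + xx)⁻¹ := by
          field_simp
        rw [this]
        exact mul_ne_zero hs (inv_ne_zero hu)
      have h3 : (1:K) + xx * (1 + yy) ≠ 0 := by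
        have : (1:K) + xx * (1 + yy) = 1 + xx + xx * yy := by ring
        rw [this]; exact hs
      field_simp
      rw [div_eq_iff (by rw [mul_comm yy xx]; exact hs)]
      ring
  intro f
  rw [hcomm, AlgEquiv.symm_apply_apply, AlgEquiv.symm_apply_apply]

end
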